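/- Let ψ be a bounded complexity measure and A a nonempty closed class of decision tables. If both S_ψ and N are bounded from above on A (say S_ψ(T) ≤ a and N(T) ≤ b for all T ∈ A), then for every table T ∈ A, ψ^d(T) ≤ 2a·log₂ b; in particular both F^W_{ψ,A} and F^Θ_{ψ,A} are bounded by the constant 2a·log₂ b. -/

import Mathlib

/- Decision tables over E_{k+2} = {0, ..., k+1}, following Ostonov & Moshkov,
"Deterministic and Strongly Nondeterministic Decision Trees for Decision Tables
from Closed Classes".  Columns are labeled with attributes (natural numbers),
rows are functions supported on the attribute set, decisions are Booleans. -/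

namespace ClosedClasses

/-- A decision table with 0-1-decisions over `E_{k+2}`. Rows are pairwise
different (they form a `Finset`) and vanish outside the attribute set. -/
structure Table (k : ℕ) where
  attrs : Finset ℕ
  rows : Finset (ℕ → Fin (k + 2))
  dec : (ℕ → Fin (k + 2)) → Bool
  supp : ∀ r ∈ rows, ∀ a ∉ attrs, r a = 0

namespace Table

variable {k : ℕ}

/-- Number of columns. -/
def W (T : Table k) : ℕ := T.attrs.card

/-- Number of rows. -/
def N (T : Table k) : ℕ := T.rows.card

/-- All rows carry the same decision. -/
def ConstDec (T : Table k) : Prop :=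
  ∀ r ∈ T.rows, ∀ r' ∈ T.rows, T.dec r = T.dec r'

/-- `D` separates the row `r` from all other rows of `T`. -/
def Separates (T : Table k) (D : Finset ℕ) (r : ℕ → Fin (k + 2)) : Prop :=
  D ⊆ T.attrs ∧ ∀ r' ∈ T.rows, r' ≠ r → ∃ a ∈ D, r a ≠ r' a

/-- `S(T, r)`: minimum cardinality of a separating set for row `r`. -/
noncomputable def Srow (T : Table k) (r : ℕ → Fin (k + 2)) : ℕ :=
  sInf {m | ∃ D : Finset ℕ, T.Separates D r ∧ D.card = m}

/-- `S(T)`: maximum over rows of `S(T, r)`. -/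
noncomputable def S (T : Table k) : ℕ :=
  sSup {m | ∃ r ∈ T.rows, T.Srow r = m}

/-- A test of `T`: a set of columns distinguishing rows with different decisions. -/
def IsTest (T : Table k) (D : Finset ℕ) : Prop :=
  D ⊆ T.attrs ∧
    ∀ r ∈ T.rows, ∀ r' ∈ T.rows, T.dec r ≠ T.dec r' → ∃ a ∈ D, r a ≠ r' a

/-- `Θ(T)`: minimum cardinality of a test of `T`. -/
noncomputable def theta (T : Table k) : ℕ :=
  sInf {m | ∃ D : Finset ℕ, T.IsTest D ∧ D.card = m}

end Table

/-- `(k+2)`-decision trees: leaves carry decisions, internal nodes query an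
attribute and branch on its `k+2` possible values. -/
inductive DT (k : ℕ) where
  | leaf : Bool → DT k
  | node : ℕ → (Fin (k + 2) → DT k) → DT k

namespace DT

variable {k : ℕ}

/-- Deterministic evaluation of a tree on a row. -/
def eval : DT k → (ℕ → Fin (k + 2)) → Bool
  | leaf b, _ => b
  | node a ch, r => eval (ch (r a)) r

/-- Depth: maximum number of queries along a complete path. -/
def depth : DT k → ℕ
  | leaf _ => 0
  | node _ ch => 1 + Finset.univ.sup fun i => (ch i).depth

/-- The set `P(Γ)` of attributes queried in the tree. -/
def attrSet : DT k → Finset ℕ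
  | leaf _ => ∅
  | node a ch => insert a (Finset.univ.biUnion fun i => (ch i).attrSet)

/-- `ψ`-cost: maximum over complete paths of `ψ` of the word of queried
attributes (the accumulator `w` holds attributes already queried). -/
def cost (ψ : List ℕ → ℕ) : DT k → List ℕ → ℕ
  | leaf _, w => ψ w
  | node a ch, w => Finset.univ.sup fun i => cost ψ (ch i) (a :: w)

end DT

/-- `Γ` is a deterministic decision tree for the table `T`. -/
def IsDT {k : ℕ} (T : Table k) (Γ : DT k) : Prop :=
  Γ.attrSet ⊆ T.attrs ∧ ∀ r ∈ T.rows, Γ.eval r = T.dec r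

/-- `h^d(T)`: minimum depth of a deterministic decision tree for `T`. -/
noncomputable def hd {k : ℕ} (T : Table k) : ℕ :=
  sInf {m | ∃ Γ : DT k, IsDT T Γ ∧ Γ.depth = m}

/-- `ψ^d(T)`: minimum `ψ`-complexity of a deterministic decision tree for `T`. -/
noncomputable def psid {k : ℕ} (ψ : List ℕ → ℕ) (T : Table k) : ℕ :=
  sInf {m | ∃ Γ : DT k, IsDT T Γ ∧ Γ.cost ψ [] = m}

/-- A row satisfies a rule (a conjunction of equations `attribute = value`). -/
def RuleSat {k : ℕ} (rule : List (ℕ × Fin (k + 2))) (r : ℕ → Fin (k + 2)) : Prop :=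
  ∀ p ∈ rule, r p.1 = p.2

/-- A strongly nondeterministic decision tree for `T`, represented by the set of
words of its complete paths (rules): every rule uses attributes of `T`, each
row with decision 1 satisfies some rule, and each rule is consistent only with
rows carrying decision 1. -/
def IsSNDT {k : ℕ} (T : Table k) (R : Finset (List (ℕ × Fin (k + 2)))) : Prop :=
  (∀ rule ∈ R, ∀ p ∈ rule, p.1 ∈ T.attrs) ∧
  (∀ r ∈ T.rows, T.dec r = true → ∃ rule ∈ R, RuleSat rule r) ∧
  (∀ rule ∈ R, ∀ r ∈ T.rows, RuleSat rule r → T.dec r = true)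

/-- `ψ^s(T)`: minimum `ψ`-complexity of a strongly nondeterministic decision
tree for `T`. -/
noncomputable def psis {k : ℕ} (ψ : List ℕ → ℕ) (T : Table k) : ℕ :=
  sInf {m | ∃ R, IsSNDT T R ∧ R.sup (fun rule => ψ (rule.map Prod.fst)) = m}

/-- `h^s(T)`: minimum depth of a strongly nondeterministic decision tree. -/
noncomputable def hs {k : ℕ} (T : Table k) : ℕ :=
  sInf {m | ∃ R, IsSNDT T R ∧ R.sup (fun rule => (rule.map Prod.fst).length) = m}

/-- A complexity measure on finite words over the alphabet `{f_i : i ∈ ω}`. -/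
structure CMeasure where
  ψ : List ℕ → ℕ
  pos : ∀ w, ψ w = 0 ↔ w = []
  perm : ∀ w w' : List ℕ, w.Perm w' → ψ w = ψ w'
  mono : ∀ w₁ w₂ : List ℕ, ψ w₁ ≤ ψ (w₁ ++ w₂)
  subadd : ∀ w₁ w₂ : List ℕ, ψ (w₁ ++ w₂) ≤ ψ w₁ + ψ w₂

/-- Bounded complexity measure: `ψ(α) ≥ |α|`. -/
def CMeasure.Bounded (ψ : CMeasure) : Prop := ∀ w : List ℕ, w.length ≤ ψ.ψ w

/-- Extension of a complexity measure to finite sets of attributes. -/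
def CMeasure.setCost (ψ : CMeasure) (D : Finset ℕ) : ℕ := ψ.ψ (D.sort (· ≤ ·))

namespace Table

variable {k : ℕ}

/-- `S_ψ(T, r)`: minimum `ψ`-complexity of a set separating `r` from the other rows. -/
noncomputable def Spsirow (ψ : CMeasure) (T : Table k) (r : ℕ → Fin (k + 2)) : ℕ :=
  sInf {m | ∃ D : Finset ℕ, T.Separates D r ∧ ψ.setCost D = m}

/-- `S_ψ(T)`: maximum over rows of `S_ψ(T, r)`. -/
noncomputable def Spsi (ψ : CMeasure) (T : Table k) : ℕ :=
  sSup {m | ∃ r ∈ T.rows, Spsirow ψ T r = m}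

/-- `Θ_ψ(T)`: minimum `ψ`-complexity of a test of `T`. -/
noncomputable def thetapsi (ψ : CMeasure) (T : Table k) : ℕ :=
  sInf {m | ∃ D : Finset ℕ, T.IsTest D ∧ ψ.setCost D = m}

/-- `W_ψ(T) = ψ(P(T))`. -/
def Wpsi (ψ : CMeasure) (T : Table k) : ℕ := ψ.setCost T.attrs

/-- `V_ψ(T) = max{ψ(f_i) : f_i ∈ P(T)}`. -/
noncomputable def Vpsi (ψ : CMeasure) (T : Table k) : ℕ :=
  sSup {m | ∃ a ∈ T.attrs, ψ.ψ [a] = m}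

end Table

/-- Restriction of a row to a set of attributes. -/
def restrict {k : ℕ} (A : Finset ℕ) (r : ℕ → Fin (k + 2)) : ℕ → Fin (k + 2) :=
  fun a => if a ∈ A then r a else 0

/-- `T'` belongs to the closure `[T]` of `T` under removal of columns and
changing of decisions: `T'` keeps a subset of the columns of `T`, its rows are
the restrictions of the rows of `T`, and its decisions are arbitrary. -/
def InClosure {k : ℕ} (T' T : Table k) : Prop :=
  T'.attrs ⊆ T.attrs ∧ (T'.rows : Set (ℕ → Fin (k + 2))) = restrict T'.attrs '' (T.rows : Set (ℕ → Fin (k + 2)))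

/-- A nonempty class of decision tables closed under removal of columns and
changing of decisions. -/
def ClosedClass {k : ℕ} (A : Set (Table k)) : Prop :=
  A.Nonempty ∧ ∀ T ∈ A, ∀ T' : Table k, InClosure T' T → T' ∈ A

/-- `Ŝ_ψ(T) = max{S_ψ(T') : T' ∈ [T]}`. -/
noncomputable def Shatpsi {k : ℕ} (ψ : CMeasure) (T : Table k) : ℕ :=
  sSup {m | ∃ T' : Table k, InClosure T' T ∧ T'.Spsi ψ = m}

/-- `Ŝ(T) = max{S(T') : T' ∈ [T]}`. -/
noncomputable def Shat {k : ℕ} (T : Table k) : ℕ :=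
  sSup {m | ∃ T' : Table k, InClosure T' T ∧ T'.S = m}

/-- Fixing the attributes of the word `p` to the listed values restricts `T`
to a subtable (possibly empty) in which all rows carry the same decision. -/
def FixConst {k : ℕ} (T : Table k) (p : List (ℕ × Fin (k + 2))) : Prop :=
  ∀ r ∈ T.rows, ∀ r' ∈ T.rows, RuleSat p r → RuleSat p r' → T.dec r = T.dec r'

/-- `M_ψ(T, δ)`: minimum `ψ`-value of a word of attributes of `T` whose
fixation to the values of `δ` yields a subtable with constant decisions. -/
noncomputable def Mpsirow {k : ℕ} (ψ : CMeasure) (T : Table k)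
    (δ : ℕ → Fin (k + 2)) : ℕ :=
  sInf {m | ∃ p : List (ℕ × Fin (k + 2)),
    (∀ q ∈ p, q.1 ∈ T.attrs ∧ q.2 = δ q.1) ∧ FixConst T p ∧
      ψ.ψ (p.map Prod.fst) = m}

/-- `M_ψ(T)`: maximum of `M_ψ(T, δ)` over all tuples `δ ∈ E_{k+2}^{W(T)}`. -/
noncomputable def Mpsi {k : ℕ} (ψ : CMeasure) (T : Table k) : ℕ :=
  sSup {m | ∃ δ : ℕ → Fin (k + 2), (∀ a ∉ T.attrs, δ a = 0) ∧ Mpsirow ψ T δ = m}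

/-- A critical table: for every column there are two rows differing exactly
in this column. -/
def Critical {k : ℕ} (T : Table k) : Prop :=
  T.rows.Nonempty ∧ ∀ a ∈ T.attrs, ∃ r ∈ T.rows, ∃ r' ∈ T.rows,
    r a ≠ r' a ∧ ∀ b : ℕ, b ≠ a → r b = r' b

/-- `H_D(n)`: the largest element of `D` not exceeding `n` (0 if none). -/
noncomputable def HD (D : Set ℕ) (n : ℕ) : ℕ := sSup (D ∩ Set.Iic n)

end ClosedClasses

open ClosedClasses
namespace ClosedClasses

variable {k : ℕ}

attribute [local instance] Classical.propDecidable

lemma psi_nil (ψ : CMeasure) : ψ.ψ [] = 0 := (ψ.pos []).mpr rfl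

lemma psi_mono_left (ψ : CMeasure) (w₁ w₂ : List ℕ) : ψ.ψ w₂ ≤ ψ.ψ (w₁ ++ w₂) := by
  rw [ψ.perm (w₁ ++ w₂) (w₂ ++ w₁) List.perm_append_comm]
  exact ψ.mono w₂ w₁

lemma sep_full (T : Table k) {r} (hr : r ∈ T.rows) : T.Separates T.attrs r := by
  refine ⟨subset_rfl, fun r' hr' hne => ?_⟩
  obtain ⟨x, hx⟩ := Function.ne_iff.mp hne
  by_cases hxa : x ∈ T.attrs
  · exact ⟨x, hxa, fun h => hx (by rw [h])⟩
  · exact absurd ((T.supp r' hr' x hxa).trans (T.supp r hr x hxa).symm) hx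

lemma spsirow_le_of_sep (ψ : CMeasure) (T : Table k) {D r} (h : T.Separates D r) :
    T.Spsirow ψ r ≤ ψ.setCost D := Nat.sInf_le ⟨D, h, rfl⟩

lemma spsirow_le_spsi (ψ : CMeasure) (T : Table k) {r} (hr : r ∈ T.rows) :
    T.Spsirow ψ r ≤ T.Spsi ψ := by
  apply le_csSup
  · refine ⟨ψ.setCost T.attrs, fun m hm => ?_⟩
    obtain ⟨r', hr', rfl⟩ := hm
    exact spsirow_le_of_sep ψ T (sep_full T hr')
  · exact ⟨r, hr, rfl⟩

lemma exists_min_sep (ψ : CMeasure) (T : Table k) {r} (hr : r ∈ T.rows) :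
    ∃ D, T.Separates D r ∧ ψ.setCost D = T.Spsirow ψ r :=
  Nat.sInf_mem (⟨ψ.setCost T.attrs, T.attrs, sep_full T hr, rfl⟩ :
    {m | ∃ D, T.Separates D r ∧ ψ.setCost D = m}.Nonempty)

/-- The table obtained from `T` by keeping only the columns in `B`. -/
noncomputable def restrTable (T : Table k) (B : Finset ℕ) : Table k where
  attrs := B
  rows := T.rows.image (restrict B)
  dec := fun _ => true
  supp := by
    intro r hr a ha
    obtain ⟨r₀, _, rfl⟩ := Finset.mem_image.mp hr
    simp [restrict, ha]

lemma restrTable_mem {A : Set (Table k)} (hA : ClosedClass A) {T} (hT : T ∈ A) {B}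
    (hB : B ⊆ T.attrs) : restrTable T B ∈ A :=
  hA.2 T hT _ ⟨hB, by simp [restrTable, Finset.coe_image]⟩

lemma psi_single_le {A : Set (Table k)} (hA : ClosedClass A) (ψ : CMeasure) {a : ℕ}
    (hS : ∀ T ∈ A, T.Spsi ψ ≤ a) {T : Table k} (hT : T ∈ A) {a₀ : ℕ} (ha₀ : a₀ ∈ T.attrs)
    {r1 r2 : ℕ → Fin (k + 2)} (h1 : r1 ∈ T.rows) (h2 : r2 ∈ T.rows) (hne : r1 a₀ ≠ r2 a₀) :
    ψ.ψ [a₀] ≤ a := by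
  have hT'A : restrTable T {a₀} ∈ A := restrTable_mem hA hT (Finset.singleton_subset_iff.mpr ha₀)
  have hρ1 : restrict {a₀} r1 ∈ (restrTable T {a₀}).rows := Finset.mem_image_of_mem _ h1
  have hρ2 : restrict {a₀} r2 ∈ (restrTable T {a₀}).rows := Finset.mem_image_of_mem _ h2
  have hval : ∀ r : ℕ → Fin (k + 2), restrict {a₀} r a₀ = r a₀ := by
    intro r; simp [restrict]
  have hρne : restrict {a₀} r2 ≠ restrict {a₀} r1 := by
    intro h; apply hne; rw [← hval r1, ← hval r2, h]
  obtain ⟨D, hD, hDc⟩ := exists_min_sep ψ (restrTable T {a₀}) hρ1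
  have hDsub : D ⊆ {a₀} := hD.1
  have hDne : D.Nonempty := by
    obtain ⟨x, hx, -⟩ := hD.2 _ hρ2 hρne
    exact ⟨x, hx⟩
  have hDeq : D = {a₀} := by
    obtain ⟨x, hx⟩ := hDne
    have hx' := Finset.mem_singleton.mp (hDsub hx)
    apply Finset.Subset.antisymm hDsub
    rw [Finset.singleton_subset_iff, ← hx']; exact hx
  have hcost : ψ.setCost D = ψ.ψ [a₀] := by
    rw [hDeq]; unfold CMeasure.setCost; rw [Finset.sort_singleton]
  calc ψ.ψ [a₀] = (restrTable T {a₀}).Spsirow ψ (restrict {a₀} r1) := by rw [← hcost, hDc]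
    _ ≤ (restrTable T {a₀}).Spsi ψ := spsirow_le_spsi ψ _ hρ1
    _ ≤ a := hS _ hT'A

lemma exists_fix {A : Set (Table k)} (hA : ClosedClass A) (ψ : CMeasure) {a : ℕ}
    (hS : ∀ T ∈ A, T.Spsi ψ ≤ a) {T : Table k} (hT : T ∈ A) (δ : ℕ → Fin (k + 2)) :
    ∃ p : List (ℕ × Fin (k + 2)), (∀ q ∈ p, q.1 ∈ T.attrs ∧ q.2 = δ q.1) ∧
      FixConst T p ∧ ψ.ψ (p.map Prod.fst) ≤ a + a := by
  classical
  rcases T.rows.eq_empty_or_nonempty with hE | ⟨r₀, hr₀⟩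
  · refine ⟨[], by simp, fun r hr => by simp [hE] at hr, by rw [List.map_nil, psi_nil]; omega⟩
  · set P := T.attrs.powerset.filter (fun B => ∃ r ∈ T.rows, ∀ x ∈ B, r x = δ x) with hP
    have hPne : P.Nonempty := by
      refine ⟨∅, Finset.mem_filter.mpr ⟨Finset.mem_powerset.mpr (Finset.empty_subset _), r₀, hr₀, by simp⟩⟩
    obtain ⟨B, hBP, hBmax⟩ := P.exists_max_image Finset.card hPne
    have hBsub : B ⊆ T.attrs := Finset.mem_powerset.mp (Finset.mem_filter.mp hBP).1
    obtain ⟨rB, hrB, hrBδ⟩ := (Finset.mem_filter.mp hBP).2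
    have hT'A : restrTable T B ∈ A := restrTable_mem hA hT hBsub
    have hδ'mem : restrict B δ ∈ (restrTable T B).rows := by
      have heq : restrict B rB = restrict B δ := by
        funext x; by_cases hx : x ∈ B <;> simp [restrict, hx]
        exact hrBδ x hx
      rw [← heq]; exact Finset.mem_image_of_mem _ hrB
    obtain ⟨D, hDsep, hDcost⟩ := exists_min_sep ψ (restrTable T B) hδ'mem
    have hDa : ψ.setCost D ≤ a := by
      rw [hDcost]; exact (spsirow_le_spsi ψ _ hδ'mem).trans (hS _ hT'A)
    have hDsub : D ⊆ B := hDsep.1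
    set L := D.sort (· ≤ ·) with hL
    set p₀ := L.map (fun x => (x, δ x)) with hp₀
    have hp₀fst : p₀.map Prod.fst = L := by simp [hp₀, Function.comp_def]
    have hp₀props : ∀ q ∈ p₀, q.1 ∈ T.attrs ∧ q.2 = δ q.1 := by
      intro q hq
      rw [hp₀, List.mem_map] at hq
      obtain ⟨x, hx, rfl⟩ := hq
      have hxD : x ∈ D := (Finset.mem_sort _).mp hx
      exact ⟨hBsub (hDsub hxD), rfl⟩
    have key : ∀ r ∈ T.rows, RuleSat p₀ r → ∀ x ∈ B, r x = δ x := by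
      intro r hr hsat
      have hrD : ∀ x ∈ D, r x = δ x := by
        intro x hx
        exact hsat (x, δ x) (List.mem_map.mpr ⟨x, (Finset.mem_sort _).mpr hx, rfl⟩)
      have hrmem : restrict B r ∈ (restrTable T B).rows := Finset.mem_image_of_mem _ hr
      by_cases heq : restrict B r = restrict B δ
      · intro x hx
        have := congrFun heq x
        simpa [restrict, hx] using this
      · obtain ⟨x, hxD, hxne⟩ := hDsep.2 _ hrmem heq
        exfalso
        apply hxne
        have hxB : x ∈ B := hDsub hxD
        simp only [restrict, if_pos hxB]
        exact (hrD x hxD).symm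
    by_cases hconst : ∀ r ∈ T.rows, ∀ r' ∈ T.rows,
        (∀ x ∈ B, r x = δ x) → (∀ x ∈ B, r' x = δ x) → T.dec r = T.dec r'
    · refine ⟨p₀, hp₀props, ?_, ?_⟩
      · intro r hr r' hr' hs hs'
        exact hconst r hr r' hr' (key r hr hs) (key r' hr' hs')
      · rw [hp₀fst]; exact hDa.trans (by omega)
    · push_neg at hconst
      obtain ⟨r1, h1, r2, h2, hr1δ, hr2δ, hdec⟩ := hconst
      have hr12 : r1 ≠ r2 := fun h => hdec (by rw [h])
      obtain ⟨x₀, hx₀⟩ := Function.ne_iff.mp hr12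
      have hx₀attrs : x₀ ∈ T.attrs := by
        by_contra h
        exact hx₀ ((T.supp r1 h1 x₀ h).trans (T.supp r2 h2 x₀ h).symm)
      have hx₀B : x₀ ∉ B := fun h => hx₀ ((hr1δ x₀ h).trans (hr2δ x₀ h).symm)
      have hmax : ¬ ∃ r ∈ T.rows, ∀ x ∈ insert x₀ B, r x = δ x := by
        intro hcon
        have hmem : insert x₀ B ∈ P := Finset.mem_filter.mpr
          ⟨Finset.mem_powerset.mpr (Finset.insert_subset hx₀attrs hBsub), hcon⟩
        have := hBmax _ hmem
        rw [Finset.card_insert_of_notMem hx₀B] at this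
        omega
      refine ⟨p₀ ++ [(x₀, δ x₀)], ?_, ?_, ?_⟩
      · intro q hq
        rcases List.mem_append.mp hq with h | h
        · exact hp₀props q h
        · rw [List.mem_singleton] at h
          subst h
          exact ⟨hx₀attrs, rfl⟩
      · intro r hr r' hr' hs hs'
        exfalso
        apply hmax
        refine ⟨r, hr, fun x hx => ?_⟩
        rcases Finset.mem_insert.mp hx with rfl | hxB
        · exact hs (x, δ x) (List.mem_append_right _ (List.mem_singleton.mpr rfl))
        · exact key r hr (fun q hq => hs q (List.mem_append_left _ hq)) x hxB
      · rw [List.map_append, hp₀fst]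
        calc ψ.ψ (L ++ [(x₀, δ x₀)].map Prod.fst) ≤ ψ.ψ L + ψ.ψ ([(x₀, δ x₀)].map Prod.fst) :=
              ψ.subadd _ _
          _ ≤ a + a := add_le_add hDa (psi_single_le hA ψ hS hT hx₀attrs h1 h2 hx₀)

end ClosedClasses
namespace ClosedClasses

variable {k : ℕ}

attribute [local instance] Classical.propDecidable

lemma exists_majority (C : Finset (ℕ → Fin (k + 2))) (T : Table k) :
    ∃ δ : ℕ → Fin (k + 2), ∀ a₀ ∈ T.attrs, ∀ v, v ≠ δ a₀ →
      2 * (C.filter (fun r => r a₀ = v)).card ≤ C.card := by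
  choose g hg1 hg2 using fun (a₀ : ℕ) =>
    Finset.exists_max_image (Finset.univ : Finset (Fin (k + 2)))
      (fun v => (C.filter (fun r => r a₀ = v)).card) Finset.univ_nonempty
  refine ⟨g, fun a₀ _ v hv => ?_⟩
  have h1 : (C.filter (fun r => r a₀ = v)).card ≤ (C.filter (fun r => r a₀ = g a₀)).card :=
    hg2 a₀ v (Finset.mem_univ v)
  have h2 : (C.filter (fun r => r a₀ = v)).card + (C.filter (fun r => r a₀ = g a₀)).card
      ≤ C.card := by
    rw [← Finset.card_union_of_disjoint]
    · exact Finset.card_le_card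
        (Finset.union_subset (Finset.filter_subset _ _) (Finset.filter_subset _ _))
    · rw [Finset.disjoint_left]
      intro r hr hr'
      have e1 := (Finset.mem_filter.mp hr).2
      have e2 := (Finset.mem_filter.mp hr').2
      exact hv (e1 ▸ e2 ▸ rfl)
  linarith

lemma log2_halving {m n : ℕ} (h : 2 * m ≤ n) (hn : 2 ≤ n) :
    Nat.log 2 m + 1 ≤ Nat.log 2 n := by
  rcases Nat.eq_zero_or_pos m with rfl | hm
  · have h := Nat.log_pos (b := 2) (n := n) (by norm_num) hn
    simp only [Nat.log_zero_right]
    omega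
  · have : Nat.log 2 (m * 2) = Nat.log 2 m + 1 :=
      Nat.log_mul_base (by norm_num) (hm.ne')
    rw [← this]
    exact Nat.log_mono_right (by omega)

lemma inner_tree (ψ : CMeasure) (a : ℕ) (T : Table k) (C : Finset (ℕ → Fin (k + 2)))
    (δ : ℕ → Fin (k + 2)) (d : Bool) (hC2 : 2 ≤ C.card) (hCrows : C ⊆ T.rows)
    (hmaj : ∀ a₀ ∈ T.attrs, ∀ v, v ≠ δ a₀ → 2 * (C.filter (fun r => r a₀ = v)).card ≤ C.card)
    (IH : ∀ C'' : Finset (ℕ → Fin (k + 2)), C'' ⊆ T.rows → C''.card < C.card →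
      ∃ Γ : DT k, Γ.attrSet ⊆ T.attrs ∧ (∀ r ∈ T.rows, r ∈ C'' → Γ.eval r = T.dec r) ∧
        ∀ w, Γ.cost ψ.ψ w ≤ ψ.ψ w + 2 * a * Nat.log 2 C''.card) :
    ∀ s : List (ℕ × Fin (k + 2)), (∀ q ∈ s, q.1 ∈ T.attrs ∧ q.2 = δ q.1) →
    ∀ C' : Finset (ℕ → Fin (k + 2)), C' ⊆ C →
    (∀ r ∈ T.rows, r ∈ C' → RuleSat s r → T.dec r = d) →
    ∃ Γ : DT k, Γ.attrSet ⊆ T.attrs ∧ (∀ r ∈ T.rows, r ∈ C' → Γ.eval r = T.dec r) ∧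
      ∀ w, Γ.cost ψ.ψ w + 2 * a ≤ ψ.ψ (s.map Prod.fst ++ w) + 2 * a * Nat.log 2 C.card := by
  intro s
  induction s with
  | nil =>
    intro _ C' _ hconst
    refine ⟨DT.leaf d, by simp [DT.attrSet], ?_, ?_⟩
    · intro r hr hrC'
      show d = T.dec r
      exact (hconst r hr hrC' (fun p hp => absurd hp List.not_mem_nil)).symm
    · intro w
      have hlog : 1 ≤ Nat.log 2 C.card := Nat.log_pos (by norm_num) hC2
      show ψ.ψ w + 2 * a ≤ ψ.ψ ([] ++ w) + 2 * a * Nat.log 2 C.card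
      rw [List.nil_append]
      have : 2 * a * 1 ≤ 2 * a * Nat.log 2 C.card := Nat.mul_le_mul_left _ hlog
      omega
  | cons q s' ih =>
    obtain ⟨a₀, v₀⟩ := q
    intro hvals C' hC'C hconst
    have ha₀ : a₀ ∈ T.attrs := (hvals (a₀, v₀) List.mem_cons_self).1
    have hv₀ : v₀ = δ a₀ := (hvals (a₀, v₀) List.mem_cons_self).2
    have hch : ∀ v : Fin (k + 2), ∃ Γ : DT k, Γ.attrSet ⊆ T.attrs ∧
        (∀ r ∈ T.rows, r ∈ C'.filter (fun r => r a₀ = v) → Γ.eval r = T.dec r) ∧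
        ∀ w, Γ.cost ψ.ψ w + 2 * a ≤ ψ.ψ (s'.map Prod.fst ++ w) + 2 * a * Nat.log 2 C.card := by
      intro v
      by_cases hvv : v = v₀
      · subst hvv
        refine ih (fun q hq => hvals q (List.mem_cons_of_mem _ hq))
          (C'.filter (fun r => r a₀ = v)) ((Finset.filter_subset _ _).trans hC'C) ?_
        intro r hr hrf hsat
        refine hconst r hr (Finset.mem_filter.mp hrf).1 ?_
        intro p hp
        rcases List.mem_cons.mp hp with rfl | hp'
        · exact (Finset.mem_filter.mp hrf).2
        · exact hsat p hp'
      · have hhalf : 2 * (C'.filter (fun r => r a₀ = v)).card ≤ C.card := by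
          calc 2 * (C'.filter (fun r => r a₀ = v)).card
              ≤ 2 * (C.filter (fun r => r a₀ = v)).card := by
                have := Finset.card_le_card (Finset.filter_subset_filter
                  (fun r => r a₀ = v) hC'C)
                linarith
            _ ≤ C.card := hmaj a₀ ha₀ v (hv₀ ▸ hvv)
        have hlt : (C'.filter (fun r => r a₀ = v)).card < C.card := by linarith
        obtain ⟨Γ, hΓ1, hΓ2, hΓ3⟩ := IH _ ((Finset.filter_subset _ _).trans
          (hC'C.trans hCrows)) hlt
        refine ⟨Γ, hΓ1, hΓ2, fun w => ?_⟩
        have hloglt := log2_halving hhalf hC2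
        have hc := hΓ3 w
        have hmono : ψ.ψ w ≤ ψ.ψ (s'.map Prod.fst ++ w) := psi_mono_left ψ _ _
        have hml : 2 * a * (Nat.log 2 (C'.filter (fun r => r a₀ = v)).card + 1)
            ≤ 2 * a * Nat.log 2 C.card := Nat.mul_le_mul_left _ hloglt
        have hml' : 2 * a * (Nat.log 2 (C'.filter (fun r => r a₀ = v)).card + 1)
            = 2 * a * Nat.log 2 (C'.filter (fun r => r a₀ = v)).card + 2 * a := by ring
        linarith
    choose ch h1 h2 h3 using hch
    refine ⟨DT.node a₀ ch, ?_, ?_, ?_⟩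
    · show insert a₀ (Finset.univ.biUnion fun i => (ch i).attrSet) ⊆ T.attrs
      refine Finset.insert_subset ha₀ ?_
      intro x hx
      obtain ⟨i, -, hxi⟩ := Finset.mem_biUnion.mp hx
      exact h1 i hxi
    · intro r hr hrC'
      show DT.eval (ch (r a₀)) r = T.dec r
      exact h2 (r a₀) r hr (Finset.mem_filter.mpr ⟨hrC', rfl⟩)
    · intro w
      show (Finset.univ.sup fun v => (ch v).cost ψ.ψ (a₀ :: w)) + 2 * a ≤ _
      obtain ⟨v, -, hveq⟩ := Finset.exists_mem_eq_sup Finset.univ Finset.univ_nonempty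
        (fun v => (ch v).cost ψ.ψ (a₀ :: w))
      rw [hveq]
      calc (ch v).cost ψ.ψ (a₀ :: w) + 2 * a
          ≤ ψ.ψ (s'.map Prod.fst ++ (a₀ :: w)) + 2 * a * Nat.log 2 C.card := h3 v (a₀ :: w)
        _ = ψ.ψ (((a₀, v₀) :: s').map Prod.fst ++ w) + 2 * a * Nat.log 2 C.card := by
            rw [ψ.perm _ _ (List.perm_middle (a := a₀) (l₁ := s'.map Prod.fst) (l₂ := w))]
            rfl

lemma outer_tree {A : Set (Table k)} (hA : ClosedClass A) (ψ : CMeasure) (a : ℕ)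
    (hS : ∀ T ∈ A, T.Spsi ψ ≤ a) {T : Table k} (hT : T ∈ A) :
    ∀ n (C : Finset (ℕ → Fin (k + 2))), C.card = n → C ⊆ T.rows →
    ∃ Γ : DT k, Γ.attrSet ⊆ T.attrs ∧ (∀ r ∈ T.rows, r ∈ C → Γ.eval r = T.dec r) ∧
      ∀ w, Γ.cost ψ.ψ w ≤ ψ.ψ w + 2 * a * Nat.log 2 C.card := by
  intro n
  induction n using Nat.strong_induction_on with
  | _ n IHn =>
    intro C hCn hCsub
    by_cases hconst : ∀ r ∈ C, ∀ r' ∈ C, T.dec r = T.dec r'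
    · refine ⟨DT.leaf (if h : C.Nonempty then T.dec h.choose else true),
        by simp [DT.attrSet], ?_, fun w => by
          show ψ.ψ w ≤ _; omega⟩
      intro r hr hrC
      show (if h : C.Nonempty then T.dec h.choose else true) = T.dec r
      rw [dif_pos ⟨r, hrC⟩]
      exact hconst _ (⟨r, hrC⟩ : C.Nonempty).choose_spec r hrC
    · push_neg at hconst
      obtain ⟨r1, h1, r2, h2, hdec⟩ := hconst
      have hC2 : 2 ≤ C.card := Finset.one_lt_card.mpr
        ⟨r1, h1, r2, h2, fun h => hdec (by rw [h])⟩
      obtain ⟨δ, hmaj⟩ := exists_majority C T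
      obtain ⟨p, hp1, hp2, hp3⟩ := exists_fix hA ψ hS hT δ
      have hconstd : ∀ r ∈ T.rows, r ∈ C → RuleSat p r →
          T.dec r = (if h : ∃ r ∈ T.rows, RuleSat p r then T.dec h.choose else true) := by
        intro r hr _ hsat
        rw [dif_pos ⟨r, hr, hsat⟩]
        have hspec := (⟨r, hr, hsat⟩ : ∃ r ∈ T.rows, RuleSat p r).choose_spec
        exact hp2 r hr _ hspec.1 hsat hspec.2
      obtain ⟨Γ, hΓ1, hΓ2, hΓ3⟩ := inner_tree ψ a T C δ _ hC2 hCsub hmaj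
        (fun C'' hsub hlt => IHn C''.card (by omega) C'' rfl hsub)
        p hp1 C subset_rfl hconstd
      refine ⟨Γ, hΓ1, hΓ2, fun w => ?_⟩
      have hc := hΓ3 w
      have hsub : ψ.ψ (p.map Prod.fst ++ w) ≤ (a + a) + ψ.ψ w :=
        le_trans (ψ.subadd _ _) (by have := hp3; omega)
      omega

end ClosedClasses

/-- Theorem 1(a): if `S_ψ ≤ a` and `N ≤ b` on a nonempty closed
class `A`, then `ψ^d(T) ≤ 2a·log₂ b` for every `T ∈ A`; in particular the
functions `F^W_{ψ,A}` and `F^Θ_{ψ,A}` are bounded by this constant. -/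
theorem psid_bounded_on_class (k : ℕ) (ψ : CMeasure) (hb : ψ.Bounded)
    (A : Set (Table k)) (hA : ClosedClass A) (a b : ℕ)
    (hS : ∀ T ∈ A, T.Spsi ψ ≤ a) (hN : ∀ T ∈ A, T.N ≤ b) :
    ∀ T ∈ A, (psid ψ.ψ T : ℝ) ≤ 2 * (a : ℝ) * Real.logb 2 (b : ℝ) := by
  intro T hT
  obtain ⟨Γ, hΓ1, hΓ2, hΓ3⟩ := outer_tree hA ψ a hS hT T.rows.card T.rows rfl subset_rfl
  have hpsid : psid ψ.ψ T ≤ 2 * a * Nat.log 2 T.N := by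
    refine le_trans (Nat.sInf_le ⟨Γ, ⟨hΓ1, fun r hr => hΓ2 r hr hr⟩, rfl⟩) ?_
    have h3 := hΓ3 []
    rw [psi_nil] at h3
    simpa [Table.N] using h3
  have hcast : (psid ψ.ψ T : ℝ) ≤ 2 * (a : ℝ) * (Nat.log 2 T.N : ℝ) := by
    calc (psid ψ.ψ T : ℝ) ≤ ((2 * a * Nat.log 2 T.N : ℕ) : ℝ) := Nat.cast_le.mpr hpsid
      _ = 2 * (a : ℝ) * (Nat.log 2 T.N : ℝ) := by push_cast; ring
  have h2a : (0 : ℝ) ≤ 2 * (a : ℝ) := by positivity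
  rcases Nat.eq_zero_or_pos T.N with h0 | hpos
  · rw [h0] at hcast
    simp only [Nat.log_zero_right, Nat.cast_zero, mul_zero] at hcast
    have hlb : (0 : ℝ) ≤ Real.logb 2 (b : ℝ) := by
      rcases Nat.eq_zero_or_pos b with rfl | hb1
      · simp
      · exact Real.logb_nonneg one_lt_two (by exact_mod_cast hb1)
    exact le_trans hcast (mul_nonneg h2a hlb)
  · have hlog1 : (Nat.log 2 T.N : ℝ) ≤ Real.logb 2 (T.N : ℝ) := by
      have := Real.natLog_le_logb T.N 2
      simpa using this
    have hlog2 : Real.logb 2 (T.N : ℝ) ≤ Real.logb 2 (b : ℝ) := by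
      apply Real.logb_le_logb_of_le one_lt_two (by exact_mod_cast hpos)
      exact_mod_cast hN T hT
    calc (psid ψ.ψ T : ℝ) ≤ 2 * (a : ℝ) * (Nat.log 2 T.N : ℝ) := hcast
      _ ≤ 2 * (a : ℝ) * Real.logb 2 (T.N : ℝ) := mul_le_mul_of_nonneg_left hlog1 h2a
      _ ≤ 2 * (a : ℝ) * Real.logb 2 (b : ℝ) := mul_le_mul_of_nonneg_left hlog2 h2a
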